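/- arXiv:2002.04720 — 6 statements merged into one kernel-verified Lean document; each statement's English description precedes it below -/
import Mathlib

section
/- Let Ω be a finite type, Q a PMF on Ω with full support, A ⊆ Ω nonempty with complement B nonempty, and λ > 0. Then any maximizer P* of the objective F(P) = log P(A) − λ·KL(P‖Q) over all PMFs P on Ω satisfies: P* restricted to A is proportional to Q restricted to A, and P* restricted to B is proportional to Q restricted to B. That is, P*(y) = α·Q(y)/Q(A)·1[y∈A] + (1−α)·Q(y)/Q(B)·1[y∈B] for some α ∈ [0,1]. -/
open Finset

noncomputable def KL {Ω : Type*} [Fintype Ω] (P Q : Ω → ℝ) : ℝ :=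
  ∑ y, P y * Real.log (P y / Q y)

/-- The penalized objective F(P) = log P(A) − λ·KL(P‖Q). -/
noncomputable def obj {Ω : Type*} [Fintype Ω] [DecidableEq Ω]
    (lam : ℝ) (Q : Ω → ℝ) (A : Finset Ω) (P : Ω → ℝ) : ℝ :=
  Real.log (∑ y ∈ A, P y) - lam * KL P Q


-- Log-sum inequality with equality case, via Jensen for x ↦ x log x.
lemma logsum_aux {Ω : Type*} (S : Finset Ω) (Q P : Ω → ℝ)
    (hQ : ∀ y ∈ S, 0 < Q y) (hP : ∀ y ∈ S, 0 ≤ P y) :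
    (∑ y ∈ S, P y) * Real.log ((∑ y ∈ S, P y) / (∑ y ∈ S, Q y)) ≤
      ∑ y ∈ S, P y * Real.log (P y / Q y) ∧
    ((∑ y ∈ S, P y * Real.log (P y / Q y)) ≤
        (∑ y ∈ S, P y) * Real.log ((∑ y ∈ S, P y) / (∑ y ∈ S, Q y)) →
      ∀ y ∈ S, P y = (∑ y ∈ S, P y) / (∑ y ∈ S, Q y) * Q y) := by
  rcases S.eq_empty_or_nonempty with rfl | hS
  · simp
  set a := ∑ y ∈ S, P y with ha
  set q := ∑ y ∈ S, Q y with hq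
  have hqpos : 0 < q := Finset.sum_pos hQ hS
  set w : Ω → ℝ := fun y => Q y / q with hw
  set p : Ω → ℝ := fun y => P y / Q y with hp
  have hw0 : ∀ y ∈ S, 0 < w y := fun y hy => div_pos (hQ y hy) hqpos
  have hw1 : ∑ y ∈ S, w y = 1 := by
    rw [← Finset.sum_div, ← hq, div_self hqpos.ne']
  have hmem : ∀ y ∈ S, p y ∈ Set.Ici (0:ℝ) :=
    fun y hy => div_nonneg (hP y hy) (hQ y hy).le
  have hsum : ∑ y ∈ S, w y • p y = a / q := by
    rw [ha, Finset.sum_div]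
    refine Finset.sum_congr rfl fun y hy => ?_
    have := (hQ y hy).ne'
    simp only [hw, hp, smul_eq_mul]
    field_simp
  have hrhs : ∀ y ∈ S, w y • ((fun x => x * Real.log x) (p y)) =
      (P y * Real.log (P y / Q y)) / q := by
    intro y hy
    have := (hQ y hy).ne'
    simp only [hw, hp, smul_eq_mul]
    field_simp
  have hf := Real.strictConvexOn_mul_log
  constructor
  · have := hf.convexOn.map_sum_le (fun i hi => (hw0 i hi).le) hw1 hmem
    rw [hsum] at this
    have h2 : ∑ y ∈ S, w y • ((fun x => x * Real.log x) (p y)) =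
        (∑ y ∈ S, P y * Real.log (P y / Q y)) / q := by
      rw [Finset.sum_div]; exact Finset.sum_congr rfl hrhs
    rw [h2] at this
    have h3 : a / q * Real.log (a / q) ≤ (∑ y ∈ S, P y * Real.log (P y / Q y)) / q := this
    calc a * Real.log (a / q) = q * (a / q * Real.log (a / q)) := by
          field_simp
      _ ≤ q * ((∑ y ∈ S, P y * Real.log (P y / Q y)) / q) := by
          exact mul_le_mul_of_nonneg_left h3 hqpos.le
      _ = ∑ y ∈ S, P y * Real.log (P y / Q y) := by field_simp
  · intro hle y hy
    have hJ := hf.convexOn.map_sum_le (fun i hi => (hw0 i hi).le) hw1 hmem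
    have h2 : ∑ y ∈ S, w y • ((fun x => x * Real.log x) (p y)) =
        (∑ y ∈ S, P y * Real.log (P y / Q y)) / q := by
      rw [Finset.sum_div]; exact Finset.sum_congr rfl hrhs
    have heq : (fun x => x * Real.log x) (∑ y ∈ S, w y • p y) =
        ∑ y ∈ S, w y • ((fun x => x * Real.log x) (p y)) := by
      refine le_antisymm hJ ?_
      rw [h2, hsum]
      calc (∑ y ∈ S, P y * Real.log (P y / Q y)) / q
          ≤ (a * Real.log (a / q)) / q := by
            gcongr
        _ = a / q * Real.log (a / q) := by ring
    have := (hf.map_sum_eq_iff hw0 hw1 hmem).mp heq y hy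
    rw [hsum] at this
    have hQy := (hQ y hy).ne'
    have : P y / Q y = a / q := this
    field_simp at this ⊢
    linarith [this]


/-- Any maximizer of log P(A) − λ KL(P‖Q) over all PMFs is a mixture of the
conditionals of Q on A and on B = Aᶜ. -/
theorem maximizer_is_mixture_of_conditionals
    {Ω : Type*} [Fintype Ω] [DecidableEq Ω]
    (lam : ℝ) (hlam : 0 < lam)
    (Q : Ω → ℝ) (hQpos : ∀ y, 0 < Q y) (hQ1 : ∑ y, Q y = 1)
    (A : Finset Ω) (hA : A.Nonempty) (hB : Aᶜ.Nonempty)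
    (Pstar : Ω → ℝ) (hPstar0 : ∀ y, 0 ≤ Pstar y) (hPstar1 : ∑ y, Pstar y = 1)
    (hmax : ∀ P : Ω → ℝ, (∀ y, 0 ≤ P y) → (∑ y, P y) = 1 →
      obj lam Q A P ≤ obj lam Q A Pstar) :
    ∃ α ∈ Set.Icc (0:ℝ) 1, ∀ y,
      Pstar y = if y ∈ A then α * Q y / (∑ z ∈ A, Q z)
                else (1 - α) * Q y / (∑ z ∈ Aᶜ, Q z) := by
  classical
  set α := ∑ y ∈ A, Pstar y with hα
  set qA := ∑ z ∈ A, Q z with hqA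
  set qB := ∑ z ∈ Aᶜ, Q z with hqB
  have hqApos : 0 < qA := Finset.sum_pos (fun y _ => hQpos y) hA
  have hqBpos : 0 < qB := Finset.sum_pos (fun y _ => hQpos y) hB
  have hsplitP : α + ∑ y ∈ Aᶜ, Pstar y = 1 := by
    rw [hα, Finset.sum_add_sum_compl]; exact hPstar1
  have hβ : ∑ y ∈ Aᶜ, Pstar y = 1 - α := by linarith
  have hα0 : 0 ≤ α := Finset.sum_nonneg fun y _ => hPstar0 y
  have hα1 : α ≤ 1 := by
    have h0 : 0 ≤ ∑ y ∈ Aᶜ, Pstar y := Finset.sum_nonneg fun y _ => hPstar0 y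
    linarith
  set Pm : Ω → ℝ := fun y => if y ∈ A then α * Q y / qA else (1-α) * Q y / qB with hPm
  have hPm0 : ∀ y, 0 ≤ Pm y := by
    intro y; by_cases h : y ∈ A <;> simp only [hPm, h, if_true, if_false]
    · exact div_nonneg (mul_nonneg hα0 (hQpos y).le) hqApos.le
    · exact div_nonneg (mul_nonneg (by linarith) (hQpos y).le) hqBpos.le
  have hPmA : ∀ y ∈ A, Pm y = α * Q y / qA := fun y hy => by simp [hPm, hy]
  have hPmB : ∀ y ∈ Aᶜ, Pm y = (1-α) * Q y / qB := fun y hy => by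
    simp [hPm, Finset.mem_compl.mp hy]
  have hsumA' : ∑ y ∈ A, α * Q y / qA = α := by
    have h1 : ∑ y ∈ A, α * Q y / qA = (α / qA) * ∑ y ∈ A, Q y := by
      rw [Finset.mul_sum]; exact Finset.sum_congr rfl fun y _ => by ring
    rw [h1, ← hqA]; field_simp
  have hsumB' : ∑ y ∈ Aᶜ, (1-α) * Q y / qB = 1 - α := by
    have h1 : ∑ y ∈ Aᶜ, (1-α) * Q y / qB = ((1-α) / qB) * ∑ y ∈ Aᶜ, Q y := by
      rw [Finset.mul_sum]; exact Finset.sum_congr rfl fun y _ => by ring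
    rw [h1, ← hqB]; field_simp
  have hsumA : ∑ y ∈ A, Pm y = α := by rw [Finset.sum_congr rfl hPmA]; exact hsumA'
  have hsumB : ∑ y ∈ Aᶜ, Pm y = 1 - α := by rw [Finset.sum_congr rfl hPmB]; exact hsumB'
  have hPm1 : ∑ y, Pm y = 1 := by
    rw [← Finset.sum_add_sum_compl A, hsumA, hsumB]; ring
  have hKLPm : KL Pm Q = α * Real.log (α/qA) + (1-α) * Real.log ((1-α)/qB) := by
    rw [KL, ← Finset.sum_add_sum_compl A]
    congr 1
    · have h1 : ∀ y ∈ A, Pm y * Real.log (Pm y / Q y)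
          = (α * Q y / qA) * Real.log (α / qA) := by
        intro y hy
        have hQy := (hQpos y).ne'
        rw [hPmA y hy]
        congr 2
        field_simp
      rw [Finset.sum_congr rfl h1, ← Finset.sum_mul, hsumA']
    · have h1 : ∀ y ∈ Aᶜ, Pm y * Real.log (Pm y / Q y)
          = ((1-α) * Q y / qB) * Real.log ((1-α) / qB) := by
        intro y hy
        have hQy := (hQpos y).ne'
        rw [hPmB y hy]
        congr 2
        field_simp
      rw [Finset.sum_congr rfl h1, ← Finset.sum_mul, hsumB']
  obtain ⟨hA1, hA2⟩ := logsum_aux A Q Pstar (fun y _ => hQpos y) (fun y _ => hPstar0 y)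
  obtain ⟨hB1, hB2⟩ := logsum_aux Aᶜ Q Pstar (fun y _ => hQpos y) (fun y _ => hPstar0 y)
  rw [← hα, ← hqA] at hA1 hA2
  rw [hβ, ← hqB] at hB1 hB2
  have hKLsplit : KL Pstar Q
      = (∑ y ∈ A, Pstar y * Real.log (Pstar y / Q y))
        + ∑ y ∈ Aᶜ, Pstar y * Real.log (Pstar y / Q y) := by
    rw [KL, ← Finset.sum_add_sum_compl A]
  -- maximality gives KL Pstar ≤ KL Pm
  have hobj := hmax Pm hPm0 hPm1
  have hKLle : KL Pstar Q ≤ KL Pm Q := by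
    simp only [obj] at hobj
    rw [hsumA, ← hα] at hobj
    have h2 : lam * KL Pstar Q ≤ lam * KL Pm Q := by linarith
    exact le_of_mul_le_mul_left h2 hlam
  have hKLge : KL Pm Q ≤ KL Pstar Q := by
    rw [hKLsplit, hKLPm]; exact add_le_add hA1 hB1
  have hAeq : (∑ y ∈ A, Pstar y * Real.log (Pstar y / Q y)) ≤ α * Real.log (α/qA) := by
    have h := le_antisymm hKLle hKLge
    rw [hKLsplit, hKLPm] at h
    linarith
  have hBeq : (∑ y ∈ Aᶜ, Pstar y * Real.log (Pstar y / Q y))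
      ≤ (1-α) * Real.log ((1-α)/qB) := by
    have h := le_antisymm hKLle hKLge
    rw [hKLsplit, hKLPm] at h
    linarith
  refine ⟨α, ⟨hα0, hα1⟩, fun y => ?_⟩
  by_cases hy : y ∈ A
  · rw [if_pos hy, hA2 hAeq y hy]; ring
  · rw [if_neg hy, hB2 hBeq y (Finset.mem_compl.mpr hy)]; ring
end

section
/- Fix λ > 0 and a ∈ (0,1). Let α* ∈ (0,1) be the unique maximizer of g(α) = log α − λ·(α log(α/a) + (1−α) log((1−α)/(1−a))). Then logit(α*) ≥ logit(a) + 1/λ, where logit(x) = log(x/(1−x)). -/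
/-- g(α) = log α − λ·KL(Ber(α)‖Ber(a)). -/
noncomputable def g (lam a : ℝ) : ℝ → ℝ :=
  fun α => Real.log α -
    lam * (α * Real.log (α / a) + (1 - α) * Real.log ((1 - α) / (1 - a)))

/-- logit(x) = log(x/(1−x)). -/
noncomputable def logit (x : ℝ) : ℝ := Real.log (x / (1 - x))

/-- Each update increases the logit of the mass on the good set by at least 1/λ. -/
theorem maximizer_logit_gain
    (lam a : ℝ) (hlam : 0 < lam) (ha : a ∈ Set.Ioo (0:ℝ) 1)
    (αs : ℝ) (hαs : αs ∈ Set.Ioo (0:ℝ) 1)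
    (hmax : ∀ β ∈ Set.Ioo (0:ℝ) 1, g lam a β ≤ g lam a αs) :
    logit a + 1 / lam ≤ logit αs := by
  obtain ⟨ha0, ha1⟩ := ha
  obtain ⟨hα0, hα1⟩ := hαs
  have ha1' : (0:ℝ) < 1 - a := by linarith
  have hα1' : (0:ℝ) < 1 - αs := by linarith
  -- derivative of α * log (α / a)
  have hd1 : HasDerivAt (fun α : ℝ => α * Real.log (α / a))
      (1 * Real.log (αs / a) + αs * ((1/a) / (αs / a))) αs := by
    have hlog : HasDerivAt (fun α : ℝ => Real.log (α / a)) ((1/a) / (αs / a)) αs := by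
      have h : HasDerivAt (fun α : ℝ => α / a) (1/a) αs := by
        simpa using (hasDerivAt_id αs).div_const a
      exact h.log (by positivity)
    exact (hasDerivAt_id αs).mul hlog
  -- derivative of (1-α) * log ((1-α)/(1-a))
  have hd2 : HasDerivAt (fun α : ℝ => (1 - α) * Real.log ((1 - α) / (1 - a)))
      ((-1) * Real.log ((1 - αs) / (1 - a)) +
        (1 - αs) * ((-1/(1-a)) / ((1 - αs) / (1 - a)))) αs := by
    have hone : HasDerivAt (fun α : ℝ => 1 - α) (-1 : ℝ) αs := by
      simpa using (hasDerivAt_id' αs).const_sub (1:ℝ)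
    have hlog : HasDerivAt (fun α : ℝ => Real.log ((1 - α) / (1 - a)))
        ((-1/(1-a)) / ((1 - αs) / (1 - a))) αs := by
      have h : HasDerivAt (fun α : ℝ => (1 - α) / (1 - a)) (-1/(1-a)) αs :=
        hone.div_const (1 - a)
      exact h.log (by positivity)
    exact hone.mul hlog
  have hdg : HasDerivAt (g lam a)
      (αs⁻¹ - lam * (Real.log (αs / a) - Real.log ((1 - αs) / (1 - a)))) αs := by
    have hL : HasDerivAt Real.log αs⁻¹ αs := Real.hasDerivAt_log (ne_of_gt hα0)
    have := hL.sub ((hd1.add hd2).const_mul lam)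
    refine HasDerivAt.congr_deriv this ?_
    have h1 : αs * ((1/a) / (αs / a)) = 1 := by field_simp
    have h2 : (1 - αs) * ((-1/(1-a)) / ((1 - αs) / (1 - a))) = -1 := by field_simp
    rw [h1, h2]; ring
  -- local max ⇒ derivative zero
  have hloc : IsLocalMax (g lam a) αs := by
    have hmem : Set.Ioo (0:ℝ) 1 ∈ nhds αs := isOpen_Ioo.mem_nhds ⟨hα0, hα1⟩
    exact Filter.eventually_of_mem hmem hmax
  have hzero := hloc.hasDerivAt_eq_zero hdg
  have hkey : lam * (Real.log (αs / a) - Real.log ((1 - αs) / (1 - a))) = αs⁻¹ := by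
    linarith
  have hlogeq : Real.log (αs / a) - Real.log ((1 - αs) / (1 - a))
      = logit αs - logit a := by
    unfold logit
    rw [Real.log_div (ne_of_gt hα0) (ne_of_gt ha0),
        Real.log_div (ne_of_gt hα1') (ne_of_gt ha1'),
        Real.log_div (ne_of_gt hα0) (ne_of_gt hα1'),
        Real.log_div (ne_of_gt ha0) (ne_of_gt ha1')]
    ring
  rw [hlogeq] at hkey
  have hinv : (1:ℝ) ≤ αs⁻¹ := by rw [one_le_inv₀ hα0]; exact hα1.le
  have h3 : 1 ≤ lam * (logit αs - logit a) := by rw [hkey]; exact hinv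
  have h4 : 1 / lam ≤ logit αs - logit a := by rw [div_le_iff₀ hlam]; nlinarith
  linarith
end

section
/- Fix λ > 0. Let (α_t)_{t≥0} be a sequence in (0,1) with α_0 ∈ (0,1) such that for each t, α_{t+1} is the unique maximizer of α ↦ log α − λ·(α log(α/α_t) + (1−α) log((1−α)/(1−α_t))) on (0,1). Then (α_t) is strictly increasing and α_t → 1 as t → ∞. -/
open Filter

/-- logit -/
noncomputable def Lg (x : ℝ) : ℝ := Real.log x - Real.log (1 - x)

lemma Lg_mono {x y : ℝ} (hx : x ∈ Set.Ioo (0:ℝ) 1) (hy : y ∈ Set.Ioo (0:ℝ) 1)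
    (h : x < y) : Lg x < Lg y := by
  have h1 : Real.log x < Real.log y := Real.log_lt_log hx.1 h
  have h2 : Real.log (1 - y) < Real.log (1 - x) :=
    Real.log_lt_log (by linarith [hy.2]) (by linarith)
  unfold Lg; linarith

lemma foc (lam : ℝ) (hlam : 0 < lam) (a β : ℝ) (ha : a ∈ Set.Ioo (0:ℝ) 1)
    (hβ : β ∈ Set.Ioo (0:ℝ) 1)
    (hmax : ∀ x ∈ Set.Ioo (0:ℝ) 1, g lam a x ≤ g lam a β) :
    Lg β = Lg a + 1 / (lam * β) := by
  obtain ⟨hβ0, hβ1⟩ := hβ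
  obtain ⟨ha0, ha1⟩ := ha
  have hβne : β ≠ 0 := ne_of_gt hβ0
  have h1β : (0:ℝ) < 1 - β := by linarith
  have h1a : (0:ℝ) < 1 - a := by linarith
  -- derivative of g at β
  have hlog : HasDerivAt Real.log β⁻¹ β := Real.hasDerivAt_log hβne
  have hinner1 : HasDerivAt (fun x : ℝ => x / a) (1 / a) β := by
    simpa using (hasDerivAt_id β).div_const a
  have hlog1 : HasDerivAt (fun x : ℝ => Real.log (x / a)) ((1 / a) / (β / a)) β :=
    hinner1.log (div_ne_zero hβne (ne_of_gt ha0))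
  have h2 : HasDerivAt (fun x : ℝ => x * Real.log (x / a))
      (1 * Real.log (β / a) + β * ((1 / a) / (β / a))) β :=
    (hasDerivAt_id β).mul hlog1
  have hinner2 : HasDerivAt (fun x : ℝ => (1 - x) / (1 - a)) (-1 / (1 - a)) β := by
    have : HasDerivAt (fun x : ℝ => 1 - x) (-1) β := by
      simpa using (hasDerivAt_id β).const_sub 1
    simpa using this.div_const (1 - a)
  have hlog2 : HasDerivAt (fun x : ℝ => Real.log ((1 - x) / (1 - a)))
      ((-1 / (1 - a)) / ((1 - β) / (1 - a))) β :=
    hinner2.log (div_ne_zero (ne_of_gt h1β) (ne_of_gt h1a))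
  have h3 : HasDerivAt (fun x : ℝ => (1 - x) * Real.log ((1 - x) / (1 - a)))
      ((-1) * Real.log ((1 - β) / (1 - a)) + (1 - β) * ((-1 / (1 - a)) / ((1 - β) / (1 - a)))) β := by
    have hsub : HasDerivAt (fun x : ℝ => 1 - x) (-1) β := by
      simpa using (hasDerivAt_id β).const_sub 1
    exact hsub.mul hlog2
  have hg : HasDerivAt (g lam a)
      (β⁻¹ - lam * ((1 * Real.log (β / a) + β * ((1 / a) / (β / a))) +
        ((-1) * Real.log ((1 - β) / (1 - a)) + (1 - β) * ((-1 / (1 - a)) / ((1 - β) / (1 - a)))))) β :=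
    hlog.sub ((h2.add h3).const_mul lam)
  have hloc : IsLocalMax (g lam a) β := by
    have hnhds : Set.Ioo (0:ℝ) 1 ∈ nhds β := isOpen_Ioo.mem_nhds ⟨hβ0, hβ1⟩
    exact Filter.eventually_of_mem hnhds (fun x hx => hmax x hx)
  have hzero := hloc.hasDerivAt_eq_zero hg
  -- simplify
  have e1 : β * ((1 / a) / (β / a)) = 1 := by field_simp
  have e2 : (1 - β) * ((-1 / (1 - a)) / ((1 - β) / (1 - a))) = -1 := by field_simp
  rw [e1, e2] at hzero
  have hld1 : Real.log (β / a) = Real.log β - Real.log a := Real.log_div hβne (ne_of_gt ha0)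
  have hld2 : Real.log ((1 - β) / (1 - a)) = Real.log (1 - β) - Real.log (1 - a) :=
    Real.log_div (ne_of_gt h1β) (ne_of_gt h1a)
  rw [hld1, hld2] at hzero
  have hβinv : β⁻¹ = lam * (Lg β - Lg a) := by unfold Lg; linarith
  have hlamβ : lam * β ≠ 0 := by positivity
  unfold Lg at hβinv ⊢
  field_simp at hβinv ⊢
  nlinarith [hβinv, hβ0, hlam]

lemma one_sub_le_exp_neg_Lg {x : ℝ} (hx : x ∈ Set.Ioo (0:ℝ) 1) :
    1 - x ≤ Real.exp (-(Lg x)) := by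
  obtain ⟨hx0, hx1⟩ := hx
  have h1x : (0:ℝ) < 1 - x := by linarith
  have : Real.exp (-(Lg x)) = (1 - x) / x := by
    rw [Lg, neg_sub, Real.exp_sub, Real.exp_log h1x, Real.exp_log hx0]
  rw [this]
  rw [le_div_iff₀ hx0]
  nlinarith

/-- Iterating the penalized update drives the mass on the good set strictly up to 1. -/
theorem iterates_strictMono_tendsto_one
    (lam : ℝ) (hlam : 0 < lam)
    (α : ℕ → ℝ) (h0 : α 0 ∈ Set.Ioo (0:ℝ) 1)
    (hmem : ∀ t, α (t + 1) ∈ Set.Ioo (0:ℝ) 1)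
    (hrec : ∀ t, ∀ β ∈ Set.Ioo (0:ℝ) 1, g lam (α t) β ≤ g lam (α t) (α (t + 1))) :
    StrictMono α ∧ Tendsto α atTop (nhds 1) := by
  have hall : ∀ t, α t ∈ Set.Ioo (0:ℝ) 1 := by
    intro t; cases t with
    | zero => exact h0
    | succ n => exact hmem n
  have hfoc : ∀ t, Lg (α (t + 1)) = Lg (α t) + 1 / (lam * α (t + 1)) :=
    fun t => foc lam hlam (α t) (α (t + 1)) (hall t) (hmem t) (hrec t)
  have hstep : ∀ t, Lg (α t) + 1 / lam ≤ Lg (α (t + 1)) := by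
    intro t
    have h1 := (hmem t).1
    have h2 := (hmem t).2
    have : 1 / lam ≤ 1 / (lam * α (t + 1)) := by
      apply one_div_le_one_div_of_le (by positivity)
      nlinarith
    linarith [hfoc t]
  -- strict mono
  have hlt : ∀ t, α t < α (t + 1) := by
    intro t
    by_contra h
    push_neg at h
    rcases eq_or_lt_of_le h with heq | hlt'
    · have := hstep t
      rw [heq] at this
      have : (0:ℝ) < 1 / lam := by positivity
      linarith [hstep t, heq ▸ (le_refl (Lg (α t)))]
    · have := Lg_mono (hmem t) (hall t) hlt'
      have h2 := hstep t
      have : (0:ℝ) < 1 / lam := by positivity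
      linarith [Lg_mono (hmem t) (hall t) hlt']
  refine ⟨strictMono_nat_of_lt_succ hlt, ?_⟩
  -- growth of Lg
  have hgrow : ∀ t : ℕ, Lg (α 0) + t / lam ≤ Lg (α t) := by
    intro t
    induction t with
    | zero => simp
    | succ n ih =>
      have := hstep n
      push_cast
      have : (Lg (α 0) + n / lam) + 1 / lam ≤ Lg (α (n + 1)) := by linarith [hstep n]
      calc Lg (α 0) + (↑n + 1) / lam = (Lg (α 0) + ↑n / lam) + 1 / lam := by ring
        _ ≤ Lg (α (n + 1)) := this
  -- squeeze
  have hub : ∀ t : ℕ, 1 - α t ≤ Real.exp (-(Lg (α 0) + t / lam)) := by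
    intro t
    calc 1 - α t ≤ Real.exp (-(Lg (α t))) := one_sub_le_exp_neg_Lg (hall t)
      _ ≤ Real.exp (-(Lg (α 0) + t / lam)) := by
          apply Real.exp_le_exp.2; linarith [hgrow t]
  have htend0 : Tendsto (fun t : ℕ => Real.exp (-(Lg (α 0) + t / lam))) atTop (nhds 0) := by
    apply Real.tendsto_exp_atBot.comp
    apply tendsto_neg_atTop_atBot.comp
    apply tendsto_atTop_add_const_left
    exact Tendsto.atTop_div_const hlam tendsto_natCast_atTop_atTop
  have hsq : Tendsto (fun t : ℕ => 1 - α t) atTop (nhds 0) := by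
    apply squeeze_zero (fun t => by linarith [(hall t).2]) hub htend0
  have : Tendsto (fun t : ℕ => 1 - (1 - α t)) atTop (nhds (1 - 0)) :=
    tendsto_const_nhds.sub hsq
  simpa using this
end

section
/- Fix λ > 0 and let (α_t) be as above (α_{t+1} maximizes log α − λ·KL(Ber(α)‖Ber(α_t)), α_0 ∈ (0,1)). Then for every ε ∈ (0,1) and every natural number t with t ≥ −λ·log(ε·α_0), we have α_t ≥ 1 − ε. -/
noncomputable def L (β : ℝ) : ℝ := Real.log β - Real.log (1 - β)

lemma hasDerivAt_g (lam a β : ℝ) (ha : a ∈ Set.Ioo (0:ℝ) 1) (hβ : β ∈ Set.Ioo (0:ℝ) 1) :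
    HasDerivAt (g lam a) (1/β - lam * (L β - L a)) β := by
  obtain ⟨ha0, ha1⟩ := ha
  obtain ⟨hβ0, hβ1⟩ := hβ
  have hβ1' : (0:ℝ) < 1 - β := by linarith
  have ha1' : (0:ℝ) < 1 - a := by linarith
  have hlog : HasDerivAt Real.log β⁻¹ β := Real.hasDerivAt_log (ne_of_gt hβ0)
  have hlog1 : HasDerivAt (fun x : ℝ => Real.log (1 - x)) ((1-β)⁻¹ * (0 - 1)) β :=
    (Real.hasDerivAt_log (ne_of_gt hβ1')).comp β ((hasDerivAt_const β (1:ℝ)).sub (hasDerivAt_id β))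
  have h2 : HasDerivAt (fun x : ℝ => x * (Real.log x - Real.log a))
      (1 * (Real.log β - Real.log a) + β * β⁻¹) β :=
    (hasDerivAt_id β).mul (hlog.sub_const _)
  have h3 : HasDerivAt (fun x : ℝ => (1 - x) * (Real.log (1 - x) - Real.log (1 - a)))
      ((0 - 1) * (Real.log (1-β) - Real.log (1-a)) + (1-β) * ((1-β)⁻¹ * (0 - 1))) β :=
    ((hasDerivAt_const β (1:ℝ)).sub (hasDerivAt_id β)).mul (hlog1.sub_const _)
  have hG : HasDerivAt (fun x : ℝ => Real.log x -
      lam * (x * (Real.log x - Real.log a) + (1 - x) * (Real.log (1 - x) - Real.log (1 - a))))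
      (1/β - lam * (L β - L a)) β := by
    have := hlog.sub ((h2.add h3).const_mul lam)
    refine this.congr_deriv ?_
    unfold L
    field_simp
    ring
  refine hG.congr_of_eventuallyEq ?_
  filter_upwards [isOpen_Ioo.mem_nhds (⟨hβ0, hβ1⟩ : β ∈ Set.Ioo (0:ℝ) 1)] with x hx
  obtain ⟨hx0, hx1⟩ := hx
  unfold g
  rw [Real.log_div (ne_of_gt hx0) (ne_of_gt ha0),
    Real.log_div (by linarith : (1:ℝ) - x ≠ 0) (ne_of_gt ha1')]

/-- Convergence-rate bound: α_t ≥ 1 − ε whenever t ≥ −λ·log(ε·α_0). -/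
theorem iterates_rate_bound
    (lam : ℝ) (hlam : 0 < lam)
    (α : ℕ → ℝ) (h0 : α 0 ∈ Set.Ioo (0:ℝ) 1)
    (hmem : ∀ t, α (t + 1) ∈ Set.Ioo (0:ℝ) 1)
    (hrec : ∀ t, ∀ β ∈ Set.Ioo (0:ℝ) 1, g lam (α t) β ≤ g lam (α t) (α (t + 1))) :
    ∀ ε ∈ Set.Ioo (0:ℝ) 1, ∀ t : ℕ,
      -lam * Real.log (ε * α 0) ≤ (t : ℝ) → 1 - ε ≤ α t := by
  have hmem' : ∀ t, α t ∈ Set.Ioo (0:ℝ) 1 := by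
    intro t; cases t with
    | zero => exact h0
    | succ n => exact hmem n
  -- step: L (α (t+1)) ≥ L (α t) + 1/lam
  have hstep : ∀ t, L (α t) + 1/lam ≤ L (α (t+1)) := by
    intro t
    have hmax : IsLocalMax (g lam (α t)) (α (t+1)) := by
      filter_upwards [isOpen_Ioo.mem_nhds (hmem t)] with x hx
      exact hrec t x hx
    have hd := hasDerivAt_g lam (α t) (α (t+1)) (hmem' t) (hmem t)
    have hzero : 1/(α (t+1)) - lam * (L (α (t+1)) - L (α t)) = 0 :=
      hmax.hasDerivAt_eq_zero hd
    have h01 := hmem t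
    have h4 : 1 ≤ 1/(α (t+1)) := by
      rw [le_div_iff₀ h01.1]; nlinarith [h01.2]
    have h5 : 1 ≤ lam * (L (α (t+1)) - L (α t)) := by linarith
    have h6 : 1/lam ≤ L (α (t+1)) - L (α t) := by
      rw [div_le_iff₀ hlam]; linarith
    linarith
  have hiter : ∀ t : ℕ, L (α 0) + t / lam ≤ L (α t) := by
    intro t
    induction t with
    | zero => simp
    | succ n ih =>
        have := hstep n
        push_cast
        have : L (α 0) + n / lam + 1/lam ≤ L (α (n+1)) := by linarith
        calc L (α 0) + (n + 1) / lam = L (α 0) + n/lam + 1/lam := by ring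
        _ ≤ L (α (n+1)) := this
  intro ε hε t ht
  obtain ⟨hε0, hε1⟩ := hε
  obtain ⟨h00, h01⟩ := h0
  obtain ⟨ht0, ht1⟩ := hmem' t
  -- 1 - α t ≤ exp (-(L (α t)))
  have key : 1 - α t ≤ Real.exp (-(L (α t))) := by
    have : Real.exp (-(L (α t))) = (1 - α t) / α t := by
      unfold L
      rw [neg_sub, ← Real.log_div (by linarith) (ne_of_gt ht0), Real.exp_log (div_pos (by linarith) ht0)]
    rw [this]
    rw [le_div_iff₀ ht0]
    nlinarith
  have hL0 : Real.log (α 0) ≤ L (α 0) := by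
    unfold L
    have : Real.log (1 - α 0) ≤ 0 := Real.log_nonpos (by linarith) (by linarith)
    linarith
  have hbound : Real.exp (-(L (α t))) ≤ ε := by
    have h1 : -(L (α t)) ≤ Real.log ε := by
      have h2 : L (α 0) + t/lam ≤ L (α t) := hiter t
      have h3 : -Real.log (ε * α 0) ≤ t/lam := by
        rw [le_div_iff₀ hlam]; linarith [ht]
      rw [Real.log_mul (ne_of_gt hε0) (ne_of_gt h00)] at h3
      linarith
    calc Real.exp (-(L (α t))) ≤ Real.exp (Real.log ε) := Real.exp_le_exp.mpr h1
    _ = ε := Real.exp_log hε0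
  linarith
end

section
/- Let Ω be a finite type, c : Ω → {0,1}, and P a PMF on Ω with p := Σ_y c(y)·P(y) > 0. Define Q(y) = c(y)·P(y)/p (the posterior under rejection sampling with filter c). Then for any PMF P' on Ω with P'(y) > 0 whenever Q(y) > 0: if Σ_y Q(y)·log P'(y) ≥ Σ_y Q(y)·log P(y), then log(Σ_y c(y)·P'(y)) ≥ log p. That is, improving the EM auxiliary objective cannot decrease the probability of satisfying the constraint. -/
open Finset

/-- EM monotonicity: improving the auxiliary objective with respect to the
rejection-sampling posterior Q ∝ P·c cannot decrease the log-probability of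
satisfying the constraint. -/
theorem em_monotonicity
    {Ω : Type*} [Fintype Ω]
    (P : Ω → ℝ) (c : Ω → ℝ)
    (hP0 : ∀ y, 0 ≤ P y) (hP1 : ∑ y, P y = 1)
    (hc : ∀ y, c y = 0 ∨ c y = 1)
    (hp : 0 < ∑ y, c y * P y)
    (P' : Ω → ℝ) (hP'0 : ∀ y, 0 ≤ P' y) (hP'1 : ∑ y, P' y = 1)
    (hpos : ∀ y, 0 < c y * P y / (∑ z, c z * P z) → 0 < P' y)
    (himp : ∑ y, (c y * P y / (∑ z, c z * P z)) * Real.log (P y)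
        ≤ ∑ y, (c y * P y / (∑ z, c z * P z)) * Real.log (P' y)) :
    Real.log (∑ y, c y * P y) ≤ Real.log (∑ y, c y * P' y) := by
  classical
  set p := ∑ z, c z * P z with hpdef
  set p' := ∑ z, c z * P' z with hp'def
  have hcP0 : ∀ y, 0 ≤ c y * P y := fun y => by
    rcases hc y with h | h <;> simp [h, hP0 y]
  have hcP'0 : ∀ y, 0 ≤ c y * P' y := fun y => by
    rcases hc y with h | h <;> simp [h, hP'0 y]
  set S := Finset.univ.filter (fun y => 0 < c y * P y) with hSdef
  have hmemS : ∀ y, y ∈ S ↔ 0 < c y * P y := by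
    intro y; simp [hSdef]
  have hc1 : ∀ y ∈ S, c y = 1 := by
    intro y hy
    rcases hc y with h | h
    · exfalso; have := (hmemS y).1 hy; rw [h] at this; simp at this
    · exact h
  have hPpos : ∀ y ∈ S, 0 < P y := by
    intro y hy
    have := (hmemS y).1 hy
    rw [hc1 y hy, one_mul] at this; exact this
  have hQpos : ∀ y ∈ S, 0 < c y * P y / p := fun y hy =>
    div_pos ((hmemS y).1 hy) hp
  have hP'pos : ∀ y ∈ S, 0 < P' y := fun y hy => hpos y (hQpos y hy)
  have hzero : ∀ y, y ∉ S → c y * P y = 0 := by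
    intro y hy
    have h1 : ¬ 0 < c y * P y := by simpa [hmemS] using hy
    exact le_antisymm (not_lt.1 h1) (hcP0 y)
  -- S is nonempty
  have hSne : S.Nonempty := by
    by_contra h
    rw [Finset.not_nonempty_iff_eq_empty] at h
    have : p = 0 := by
      rw [hpdef]
      apply Finset.sum_eq_zero
      intro y _
      apply hzero
      rw [h]; exact Finset.notMem_empty y
    linarith
  -- p' > 0
  have hSsum' : ∑ y ∈ S, P' y ≤ p' := by
    have h1 : ∑ y ∈ S, P' y = ∑ y ∈ S, c y * P' y :=
      Finset.sum_congr rfl (fun y hy => by rw [hc1 y hy, one_mul])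
    rw [h1, hp'def]
    exact Finset.sum_le_sum_of_subset_of_nonneg (Finset.subset_univ S)
      (fun y _ _ => hcP'0 y)
  have hp' : 0 < p' := by
    have : 0 < ∑ y ∈ S, P' y :=
      Finset.sum_pos (fun y hy => hP'pos y hy) hSne
    linarith
  -- sum of P over S is p
  have hSsum : ∑ y ∈ S, P y = p := by
    have h1 : ∑ y ∈ S, P y = ∑ y ∈ S, c y * P y :=
      Finset.sum_congr rfl (fun y hy => by rw [hc1 y hy, one_mul])
    rw [h1, hpdef]
    exact Finset.sum_subset (Finset.subset_univ S) (fun y _ hy => hzero y hy)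
  -- restrict sums in himp to S
  have hrestrict : ∀ f : Ω → ℝ,
      ∑ y, (c y * P y / p) * f y = ∑ y ∈ S, (c y * P y / p) * f y := by
    intro f
    symm
    apply Finset.sum_subset (Finset.subset_univ S)
    intro y _ hy
    rw [hzero y hy]; ring
  -- key pointwise inequality
  have key : ∀ y ∈ S,
      (c y * P y / p) * (Real.log (P' y) - Real.log (P y))
        ≤ P' y / p' - P y / p + (c y * P y / p) * (Real.log p' - Real.log p) := by
    intro y hy
    have hc1y := hc1 y hy
    have hPy := hPpos y hy
    have hP'y := hP'pos y hy
    have hratio : 0 < P' y * p / (P y * p') :=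
      div_pos (mul_pos hP'y hp) (mul_pos hPy hp')
    have hlog := Real.log_le_sub_one_of_pos hratio
    have hlogeq : Real.log (P' y * p / (P y * p'))
        = Real.log (P' y) - Real.log (P y) - (Real.log p' - Real.log p) := by
      rw [Real.log_div (by positivity) (by positivity),
          Real.log_mul (ne_of_gt hP'y) (ne_of_gt hp),
          Real.log_mul (ne_of_gt hPy) (ne_of_gt hp')]
      ring
    rw [hlogeq] at hlog
    have hmul := mul_le_mul_of_nonneg_left hlog (le_of_lt (div_pos hPy hp))
    have heq1 : P y / p * (P' y * p / (P y * p')) = P' y / p' := by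
      field_simp
    have heq2 : P y / p * (P' y * p / (P y * p') - 1) = P' y / p' - P y / p := by
      rw [mul_sub, heq1]; ring
    rw [hc1y, one_mul]
    calc P y / p * (Real.log (P' y) - Real.log (P y))
        = P y / p * (Real.log (P' y) - Real.log (P y) - (Real.log p' - Real.log p))
          + P y / p * (Real.log p' - Real.log p) := by ring
      _ ≤ (P' y / p' - P y / p) + P y / p * (Real.log p' - Real.log p) := by
          linarith [le_trans hmul (le_of_eq heq2)]
      _ = P' y / p' - P y / p + P y / p * (Real.log p' - Real.log p) := by ring
  -- sum the key inequality over S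
  have hsumQ : ∑ y ∈ S, (c y * P y / p) = 1 := by
    have : ∑ y ∈ S, c y * P y / p = (∑ y ∈ S, c y * P y) / p :=
      (Finset.sum_div _ _ _).symm
    rw [this]
    have h1 : ∑ y ∈ S, c y * P y = p := by
      rw [← hSsum]
      exact Finset.sum_congr rfl (fun y hy => by rw [hc1 y hy, one_mul])
    rw [h1, div_self (ne_of_gt hp)]
  have hsummed : ∑ y ∈ S, (c y * P y / p) * (Real.log (P' y) - Real.log (P y))
      ≤ Real.log p' - Real.log p := by
    calc ∑ y ∈ S, (c y * P y / p) * (Real.log (P' y) - Real.log (P y))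
        ≤ ∑ y ∈ S, (P' y / p' - P y / p + (c y * P y / p) * (Real.log p' - Real.log p)) :=
          Finset.sum_le_sum key
      _ = (∑ y ∈ S, P' y) / p' - (∑ y ∈ S, P y) / p
          + (∑ y ∈ S, (c y * P y / p)) * (Real.log p' - Real.log p) := by
          rw [Finset.sum_add_distrib, Finset.sum_sub_distrib, ← Finset.sum_mul,
            ← Finset.sum_div, ← Finset.sum_div]
      _ ≤ 1 - 1 + 1 * (Real.log p' - Real.log p) := by
          have h1 : (∑ y ∈ S, P' y) / p' ≤ 1 :=
            (div_le_one hp').2 hSsum'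
          rw [hSsum, div_self (ne_of_gt hp), hsumQ]
          linarith
      _ = Real.log p' - Real.log p := by ring
  -- conclude
  have himp' : 0 ≤ ∑ y ∈ S, (c y * P y / p) * (Real.log (P' y) - Real.log (P y)) := by
    have h1 := hrestrict (fun y => Real.log (P y))
    have h2 := hrestrict (fun y => Real.log (P' y))
    have : ∑ y ∈ S, (c y * P y / p) * (Real.log (P' y) - Real.log (P y))
        = ∑ y ∈ S, (c y * P y / p) * Real.log (P' y)
          - ∑ y ∈ S, (c y * P y / p) * Real.log (P y) := by
      rw [← Finset.sum_sub_distrib]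
      exact Finset.sum_congr rfl (fun y _ => by ring)
    rw [this, ← h1, ← h2]
    linarith [himp]
  linarith [le_trans himp' hsummed]
end

section
/- Let Ω be a finite type, Q a full-support PMF on Ω, A ⊆ Ω nonempty with nonempty complement, and λ > 0. For the objective F(P) = log P(A) − λ·KL(P‖Q) over PMFs P with P(A) > 0, any maximizer P* satisfies P*(y) > 0 for all y ∈ Ω. In particular, the update never collapses support onto A in finitely many steps. -/
open Finset

lemma mix_term (p q α : ℝ) (hp : 0 ≤ p) (hq : 0 < q) (hα0 : 0 ≤ α) (hα1 : α ≤ 1) :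
    ((1-α)*p + α*q) * Real.log (((1-α)*p + α*q)/q) ≤ (1-α) * (p * Real.log (p/q)) := by
  set u := p / q with hu
  have hu0 : 0 ≤ u := div_nonneg hp hq.le
  have hmem : (1:ℝ) ∈ Set.Ici (0:ℝ) := by norm_num
  have hc : ((1-α)•u + α•(1:ℝ)) * Real.log ((1-α)•u + α•(1:ℝ))
      ≤ (1-α)•(u*Real.log u) + α•((1:ℝ)*Real.log 1) :=
    Real.convexOn_mul_log.2 (Set.mem_Ici.2 hu0) hmem (by linarith) hα0 (by ring)
  simp only [smul_eq_mul, mul_one, Real.log_one, mul_zero, add_zero] at hc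
  have hqu : q * u = p := by rw [hu]; exact mul_div_cancel₀ p hq.ne'
  have key : ((1-α)*p + α*q)/q = (1-α)*u + α := by
    field_simp [hu]; linear_combination (α - 1) * hqu
  have : ((1-α)*p + α*q) * Real.log (((1-α)*p + α*q)/q)
      = q * (((1-α)*u + α) * Real.log ((1-α)*u + α)) := by
    rw [key]; have : (1-α)*p + α*q = q * ((1-α)*u + α) := by linear_combination (α - 1) * hqu
    rw [this]; ring
  rw [this]
  have h2 : (1-α) * (p * Real.log (p/q)) = q * ((1-α) * (u * Real.log u)) := by
    rw [← hu]
    have : p = q * u := hqu.symm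
    rw [this]; ring
  rw [h2]
  exact mul_le_mul_of_nonneg_left hc hq.le

/-- Any maximizer of log P(A) − λ KL(P‖Q) over PMFs with P(A) > 0 has full
support: the update never collapses support onto A in finitely many steps. -/
theorem maximizer_full_support
    {Ω : Type*} [Fintype Ω] [DecidableEq Ω]
    (lam : ℝ) (hlam : 0 < lam)
    (Q : Ω → ℝ) (hQpos : ∀ y, 0 < Q y) (hQ1 : ∑ y, Q y = 1)
    (A : Finset Ω) (hA : A.Nonempty) (hB : Aᶜ.Nonempty)
    (Pstar : Ω → ℝ) (hPstar0 : ∀ y, 0 ≤ Pstar y) (hPstar1 : ∑ y, Pstar y = 1)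
    (hPstarA : 0 < ∑ y ∈ A, Pstar y)
    (hmax : ∀ P : Ω → ℝ, (∀ y, 0 ≤ P y) → (∑ y, P y) = 1 →
      (0 < ∑ y ∈ A, P y) → obj lam Q A P ≤ obj lam Q A Pstar) :
    ∀ y, 0 < Pstar y := by
  intro y0
  by_contra hcon
  have hy0 : Pstar y0 = 0 := le_antisymm (not_lt.mp hcon) (hPstar0 y0)
  set K : ℝ := KL Pstar Q with hK
  set q0 : ℝ := Q y0 with hq0
  have hq0pos : 0 < q0 := hQpos y0
  set α : ℝ := min (1/2) (Real.exp (-(3 + lam*|K|)/(lam*q0))) with hαdef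
  have hα0 : 0 < α := lt_min (by norm_num) (Real.exp_pos _)
  have hα12 : α ≤ 1/2 := min_le_left _ _
  have hα1 : α ≤ 1 := by linarith
  have h1α : (0:ℝ) < 1 - α := by linarith
  have hlogα : lam * q0 * Real.log α ≤ -(3 + lam*|K|) := by
    have h1 : Real.log α ≤ -(3 + lam*|K|)/(lam*q0) := by
      calc Real.log α ≤ Real.log (Real.exp (-(3 + lam*|K|)/(lam*q0))) :=
            Real.log_le_log hα0 (min_le_right _ _)
        _ = -(3 + lam*|K|)/(lam*q0) := Real.log_exp _
    have hlq : 0 < lam * q0 := mul_pos hlam hq0pos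
    have := mul_le_mul_of_nonneg_left h1 hlq.le
    calc lam * q0 * Real.log α ≤ lam * q0 * (-(3 + lam*|K|)/(lam*q0)) := this
      _ = -(3 + lam*|K|) := by field_simp
  set P : Ω → ℝ := fun y => (1-α)*Pstar y + α*Q y with hPdef
  have hP0 : ∀ y, 0 ≤ P y := fun y =>
    add_nonneg (mul_nonneg h1α.le (hPstar0 y)) (mul_nonneg hα0.le (hQpos y).le)
  have hP1 : ∑ y, P y = 1 := by
    simp only [hPdef, Finset.sum_add_distrib, ← Finset.mul_sum, hPstar1, hQ1]; ring
  have hPA : 0 < ∑ y ∈ A, P y :=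
    Finset.sum_pos (fun y _ => add_pos_of_nonneg_of_pos
      (mul_nonneg h1α.le (hPstar0 y)) (mul_pos hα0 (hQpos y))) hA
  -- KL bound
  have hKLbound : KL P Q ≤ α*q0*Real.log α + (1-α)*K := by
    have hsplit : KL P Q = P y0 * Real.log (P y0 / Q y0)
        + ∑ y ∈ Finset.univ.erase y0, P y * Real.log (P y / Q y) :=
      (Finset.add_sum_erase _ _ (Finset.mem_univ y0)).symm
    have hy0term : P y0 * Real.log (P y0 / Q y0) = α*q0*Real.log α := by
      have : P y0 = α * q0 := by simp [hPdef, hy0, hq0]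
      rw [this]
      rw [mul_div_assoc, div_self hq0pos.ne', mul_one]
    have hrest : ∑ y ∈ Finset.univ.erase y0, P y * Real.log (P y / Q y)
        ≤ ∑ y ∈ Finset.univ.erase y0, (1-α) * (Pstar y * Real.log (Pstar y / Q y)) :=
      Finset.sum_le_sum (fun y _ => mix_term (Pstar y) (Q y) α (hPstar0 y) (hQpos y) hα0.le hα1)
    have hKrest : ∑ y ∈ Finset.univ.erase y0, (1-α) * (Pstar y * Real.log (Pstar y / Q y))
        = (1-α)*K := by
      rw [← Finset.mul_sum]
      congr 1
      rw [hK, KL, ← Finset.add_sum_erase Finset.univ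
        (fun y => Pstar y * Real.log (Pstar y / Q y)) (Finset.mem_univ y0)]
      simp [hy0]
    rw [hsplit, hy0term]
    linarith [hrest.trans_eq hKrest]
  -- log bound
  have hSA : (1-α) * (∑ y ∈ A, Pstar y) ≤ ∑ y ∈ A, P y := by
    have : ∑ y ∈ A, P y = (1-α) * (∑ y ∈ A, Pstar y) + α * ∑ y ∈ A, Q y := by
      simp only [hPdef, Finset.sum_add_distrib, ← Finset.mul_sum]
    rw [this]
    have : 0 ≤ α * ∑ y ∈ A, Q y :=
      mul_nonneg hα0.le (Finset.sum_nonneg fun y _ => (hQpos y).le)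
    linarith
  have hlog1α : -(2*α) ≤ Real.log (1-α) := by
    have h1 : Real.log (1/(1-α)) ≤ 1/(1-α) - 1 := Real.log_le_sub_one_of_pos (by positivity)
    rw [one_div, Real.log_inv] at h1
    have h2 : 1/(1-α) - 1 ≤ 2*α := by
      rw [div_sub' h1α.ne', div_le_iff₀ h1α]
      nlinarith
    rw [one_div] at h2
    linarith
  have hlogbound : Real.log (∑ y ∈ A, Pstar y) - 2*α ≤ Real.log (∑ y ∈ A, P y) := by
    have h1 : Real.log ((1-α) * ∑ y ∈ A, Pstar y) ≤ Real.log (∑ y ∈ A, P y) :=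
      Real.log_le_log (by positivity) hSA
    rw [Real.log_mul h1α.ne' hPstarA.ne'] at h1
    linarith
  -- contradiction
  have hobj := hmax P hP0 hP1 hPA
  rw [obj, obj] at hobj
  have hKabs : -|K| ≤ K := neg_abs_le K
  have hstep : -(α * (lam * q0 * Real.log α)) ≥ α * (3 + lam*|K|) := by
    have := mul_le_mul_of_nonneg_left hlogα hα0.le
    linarith
  nlinarith [mul_le_mul_of_nonneg_left hKabs (mul_pos hlam hα0).le,
    mul_le_mul_of_nonneg_left hKLbound hlam.le, hα0]
end
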